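/- Let κ be an infinite cardinal, S a set with |S| > 2^κ, and f a coloring of the unordered pairs of S by a set of colors ι with |ι| ≤ κ. Then there exists a subset J ⊆ S with |J| ≥ κ⁺ (in particular, an infinite subset) all of whose pairs receive the same color. -/

import Mathlib

universe u

open Cardinal Ordinal Set

namespace ErdosRado

open scoped Classical

instance (o : Ordinal.{u}) : IsWellOrder o.ToType (· < ·) := isWellOrder_lt

variable {S ι : Type u} (f : Sym2 S → ι) (K : Type u)

/-- Choose a "realizer": an element distinct from all `g k` whose colours with the `g k`
are prescribed by `p`, if one exists. -/
noncomputable def realize [Nonempty S] (g : K → S) (p : K → ι) : S :=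
  if h : ∃ x : S, (∀ k, f s(x, g k) = p k) ∧ ∀ k, x ≠ g k then h.choose
  else Classical.arbitrary S

theorem realize_spec [Nonempty S] {g : K → S} {p : K → ι}
    (h : ∃ x : S, (∀ k, f s(x, g k) = p k) ∧ ∀ k, x ≠ g k) :
    (∀ k, f s(realize f K g p, g k) = p k) ∧ ∀ k, realize f K g p ≠ g k := by
  rw [realize, dif_pos h]; exact h.choose_spec

/-- One closure step. -/
noncomputable def step [Nonempty S] (C : Set S) : Set S :=
  C ∪ Set.range fun gp : (K → C) × (K → ι) =>
    realize f K (fun k => ((gp.1 k : S))) gp.2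

theorem subset_step [Nonempty S] (C : Set S) : C ⊆ step f K C := subset_union_left

theorem realize_mem_step [Nonempty S] {C : Set S} {g : K → S} (hg : ∀ k, g k ∈ C)
    (p : K → ι) : realize f K g p ∈ step f K C :=
  Or.inr ⟨⟨fun k => ⟨g k, hg k⟩, p⟩, rfl⟩

theorem mk_step_le [Nonempty S] {κ : Cardinal.{u}} (hκ : ℵ₀ ≤ κ) (hK : #K = κ)
    (hι : #ι ≤ κ) {C : Set S} (hC : #C ≤ 2 ^ κ) : #(step f K C) ≤ 2 ^ κ := by
  have h2 : (ℵ₀ : Cardinal) ≤ 2 ^ κ := hκ.trans (cantor κ).le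
  have hck : #C ^ κ ≤ 2 ^ κ := by
    calc #C ^ κ ≤ (2 ^ κ) ^ κ := power_le_power_right hC
    _ = 2 ^ (κ * κ) := by rw [← power_mul]
    _ = 2 ^ κ := by rw [mul_eq_self hκ]
  have hik : #ι ^ κ ≤ 2 ^ κ :=
    calc #ι ^ κ ≤ κ ^ κ := power_le_power_right hι
    _ = 2 ^ κ := power_self_eq hκ
  calc #(step f K C) ≤ #C + #(Set.range fun gp : (K → C) × (K → ι) =>
        realize f K (fun k => ((gp.1 k : S))) gp.2) := mk_union_le _ _
  _ ≤ #C + #((K → C) × (K → ι)) := by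
      exact add_le_add_right mk_range_le _
  _ = #C + #C ^ κ * #ι ^ κ := by
      rw [mk_prod, Cardinal.lift_id, Cardinal.lift_id, ← hK, power_def, power_def]
  _ ≤ 2 ^ κ + 2 ^ κ * 2 ^ κ := add_le_add hC (mul_le_mul' hck hik)
  _ = 2 ^ κ + 2 ^ κ := by rw [mul_eq_self h2]
  _ = 2 ^ κ := add_eq_self h2

variable (κ : Cardinal.{u})

/-- The transfinite closure chain, of length `κ⁺`. -/
noncomputable def chain [Nonempty S] (x₀ : S) (a : (Order.succ κ).ord.ToType) : Set S :=
  step f K (insert x₀ (⋃ b : {b // b < a}, chain x₀ b.1))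
termination_by a
decreasing_by exact b.2

theorem chain_eq [Nonempty S] (x₀ : S) (a : (Order.succ κ).ord.ToType) :
    chain f K κ x₀ a = step f K (insert x₀ (⋃ b : {b // b < a}, chain f K κ x₀ b.1)) := by
  rw [chain]

theorem mk_initialSeg_le (hκ : ℵ₀ ≤ κ) (a : (Order.succ κ).ord.ToType) :
    #{b // b < a} ≤ κ := by
  have h := mk_Iio_toType_ord_lt (c := Order.succ κ) a
  exact Order.lt_succ_iff.mp h

theorem mk_chain_le [Nonempty S] (hκ : ℵ₀ ≤ κ) (hK : #K = κ) (hι : #ι ≤ κ) (x₀ : S)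
    (a : (Order.succ κ).ord.ToType) : #(chain f K κ x₀ a) ≤ 2 ^ κ := by
  have h2 : (ℵ₀ : Cardinal) ≤ 2 ^ κ := hκ.trans (cantor κ).le
  induction a using WellFoundedLT.induction with
  | _ a IH =>
    rw [chain_eq]
    apply mk_step_le f K hκ hK hι
    calc #(insert x₀ (⋃ b : {b // b < a}, chain f K κ x₀ b.1) : Set S)
        ≤ #(⋃ b : {b // b < a}, chain f K κ x₀ b.1) + 1 := mk_insert_le
    _ ≤ (Cardinal.sum fun b : {b // b < a} => #(chain f K κ x₀ b.1)) + 1 := by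
        exact add_le_add_left mk_iUnion_le_sum_mk _
    _ ≤ (Cardinal.sum fun _ : {b // b < a} => (2 ^ κ)) + 1 := by
        exact add_le_add_left (Cardinal.sum_le_sum _ _ fun b : {b // b < a} => IH b.1 b.2) _
    _ = #{b // b < a} * 2 ^ κ + 1 := by rw [Cardinal.sum_const' _ _]
    _ ≤ 2 ^ κ * 2 ^ κ + 2 ^ κ := by
        refine add_le_add (mul_le_mul' ((mk_initialSeg_le κ hκ a).trans (cantor κ).le) le_rfl)
          (one_le_aleph0.trans h2)
    _ = 2 ^ κ + 2 ^ κ := by rw [mul_eq_self h2]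
    _ = 2 ^ κ := add_eq_self h2

/-- The closure set. -/
noncomputable def Cset [Nonempty S] (x₀ : S) : Set S :=
  ⋃ a, chain f K κ x₀ a

theorem chain_subset_Cset [Nonempty S] (x₀ : S) (a : (Order.succ κ).ord.ToType) :
    chain f K κ x₀ a ⊆ Cset f K κ x₀ :=
  subset_iUnion (chain f K κ x₀) a

theorem mem_Cset_x₀ [Nonempty S] (hκ : ℵ₀ ≤ κ) (x₀ : S) : x₀ ∈ Cset f K κ x₀ := by
  have hne : Nonempty ((Order.succ κ).ord.ToType) := by
    rw [toType_nonempty_iff_ne_zero]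
    simp only [ne_eq, ord_eq_zero]
    exact fun h => (Order.succ_ne_bot κ) (by simpa using h)
  obtain ⟨a⟩ := hne
  apply chain_subset_Cset f K κ x₀ a
  rw [chain_eq]
  exact subset_step f K _ (mem_insert _ _)

theorem mk_Cset_le [Nonempty S] (hκ : ℵ₀ ≤ κ) (hK : #K = κ) (hι : #ι ≤ κ) (x₀ : S) :
    #(Cset f K κ x₀) ≤ 2 ^ κ := by
  have h2 : (ℵ₀ : Cardinal) ≤ 2 ^ κ := hκ.trans (cantor κ).le
  calc #(Cset f K κ x₀) ≤ Cardinal.sum fun a => #(chain f K κ x₀ a) := mk_iUnion_le_sum_mk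
  _ ≤ Cardinal.sum fun _ : (Order.succ κ).ord.ToType => (2 ^ κ) :=
      Cardinal.sum_le_sum _ _ fun a => mk_chain_le f K κ hκ hK hι x₀ a
  _ = #((Order.succ κ).ord.ToType) * 2 ^ κ := Cardinal.sum_const' _ _
  _ = Order.succ κ * 2 ^ κ := by rw [mk_toType, card_ord]
  _ ≤ 2 ^ κ * 2 ^ κ := by
      exact mul_le_mul' (Order.succ_le_of_lt (cantor κ)) le_rfl
  _ = 2 ^ κ := mul_eq_self h2

theorem bounded_family (hκ : ℵ₀ ≤ κ) {β : Type u} (hβ : #β ≤ κ)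
    (g : β → (Order.succ κ).ord.ToType) : ∃ a, ∀ b, g b < a := by
  have hreg := Cardinal.isRegular_succ hκ
  have hb : ¬ IsCofinal (Set.range g) := by
    intro hc
    have hle := Order.cof_le hc
    rw [Ordinal.cof_toType, hreg.cof_ord] at hle
    exact absurd ((mk_range_le.trans hβ).trans_lt (Order.lt_succ κ)) (not_lt.2 hle)
  obtain ⟨a, ha⟩ := not_isCofinal_iff.1 hb
  exact ⟨a, fun b => ha _ (Set.mem_range_self b)⟩

theorem realize_mem_Cset [Nonempty S] (hκ : ℵ₀ ≤ κ) (hK : #K ≤ κ) (x₀ : S)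
    {g : K → S} (hg : ∀ k, g k ∈ Cset f K κ x₀) (p : K → ι) :
    realize f K g p ∈ Cset f K κ x₀ := by
  choose a ha using fun k => mem_iUnion.1 (hg k)
  obtain ⟨a₀, ha₀⟩ := bounded_family κ hκ hK a
  have hmem : ∀ k, g k ∈ insert x₀ (⋃ b : {b // b < a₀}, chain f K κ x₀ b.1) := fun k =>
    mem_insert_of_mem _ (mem_iUnion.2 ⟨⟨a k, ha₀ k⟩, ha k⟩)
  have h := realize_mem_step f K hmem p
  rw [← chain_eq] at h
  exact chain_subset_Cset f K κ x₀ a₀ h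

/-- Choose a function `K → S` with range exactly `B`, if one exists. -/
noncomputable def presentation [Nonempty S] (B : Set S) : K → S :=
  if h : ∃ g : K → S, Set.range g = B then h.choose else fun _ => Classical.arbitrary S

theorem presentation_range [Nonempty S] {B : Set S} (hB : B.Nonempty) (h : #B ≤ #K) :
    Set.range (presentation K B) = B := by
  have hex : ∃ g : K → S, Set.range g = B := by
    haveI : Nonempty B := hB.to_subtype
    obtain ⟨e⟩ := Cardinal.le_def _ _ |>.mp h
    refine ⟨fun k => ↑(Function.invFun e k), ?_⟩
    have hsurj : Function.Surjective (Function.invFun e) :=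
      Function.invFun_surjective e.injective
    ext x
    constructor
    · rintro ⟨k, rfl⟩; exact (Function.invFun e k).2
    · intro hx
      obtain ⟨k, hk⟩ := hsurj ⟨x, hx⟩
      exact ⟨k, by simp only []; rw [hk]⟩
  rw [presentation, dif_pos hex]
  exact hex.choose_spec

/-- The `κ⁺`-sequence of realizers of the type of `s` over the previous elements. -/
noncomputable def seq [Nonempty S] (x₀ s : S) (a : (Order.succ κ).ord.ToType) : S :=
  let g := presentation K (insert x₀ {x | ∃ b, ∃ _ : b < a, seq x₀ s b = x})
  realize f K g fun k => f s(s, g k)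
termination_by a
decreasing_by assumption

/-- The set of previous elements of the sequence, together with `x₀`. -/
noncomputable def Bset [Nonempty S] (x₀ s : S) (a : (Order.succ κ).ord.ToType) : Set S :=
  insert x₀ {x | ∃ b, ∃ _ : b < a, seq f K κ x₀ s b = x}

theorem seq_eq [Nonempty S] (x₀ s : S) (a : (Order.succ κ).ord.ToType) :
    seq f K κ x₀ s a = realize f K (presentation K (Bset f K κ x₀ s a))
      fun k => f s(s, presentation K (Bset f K κ x₀ s a) k) := by
  rw [seq]; rfl

theorem seq_spec [Nonempty S] (hκ : ℵ₀ ≤ κ) (hK : #K = κ) (x₀ s : S)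
    (hs : s ∉ Cset f K κ x₀) (a : (Order.succ κ).ord.ToType) :
    seq f K κ x₀ s a ∈ Cset f K κ x₀ ∧
      ∀ b, b < a → f s(seq f K κ x₀ s a, seq f K κ x₀ s b) = f s(s, seq f K κ x₀ s b) ∧
        seq f K κ x₀ s a ≠ seq f K κ x₀ s b := by
  induction a using WellFoundedLT.induction with
  | _ a IH =>
    have hBne : (Bset f K κ x₀ s a).Nonempty := ⟨x₀, mem_insert _ _⟩
    have hBsub : Bset f K κ x₀ s a ⊆ Cset f K κ x₀ := by
      intro x hx
      rcases hx with rfl | ⟨b, hb, rfl⟩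
      · exact mem_Cset_x₀ f K κ hκ _
      · exact (IH b hb).1
    have hBcard : #(Bset f K κ x₀ s a) ≤ #K := by
      rw [hK]
      have h1 : #{x | ∃ b, ∃ _ : b < a, seq f K κ x₀ s b = x} ≤ κ := by
        have he : {x | ∃ b, ∃ _ : b < a, seq f K κ x₀ s b = x}
            = Set.range fun p : {b // b < a} => seq f K κ x₀ s p.1 := by
          ext x
          constructor
          · rintro ⟨b, hb, rfl⟩; exact ⟨⟨b, hb⟩, rfl⟩
          · rintro ⟨⟨b, hb⟩, rfl⟩; exact ⟨b, hb, rfl⟩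
        rw [he]
        exact mk_range_le.trans (mk_initialSeg_le κ hκ a)
      calc #(Bset f K κ x₀ s a) ≤ #{x | ∃ b, ∃ _ : b < a, seq f K κ x₀ s b = x} + 1 :=
            mk_insert_le
      _ ≤ κ + κ := add_le_add h1 (one_le_aleph0.trans hκ)
      _ = κ := add_eq_self hκ
    have hrange := presentation_range K hBne hBcard
    have hgB : ∀ k, presentation K (Bset f K κ x₀ s a) k ∈ Bset f K κ x₀ s a := fun k => by
      have h := mem_range_self (f := presentation K (Bset f K κ x₀ s a)) k
      rwa [hrange] at h
    have hgC : ∀ k, presentation K (Bset f K κ x₀ s a) k ∈ Cset f K κ x₀ := fun k =>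
      hBsub (hgB k)
    have hex : ∃ x : S, (∀ k, f s(x, presentation K (Bset f K κ x₀ s a) k) =
        (fun k => f s(s, presentation K (Bset f K κ x₀ s a) k)) k) ∧
        ∀ k, x ≠ presentation K (Bset f K κ x₀ s a) k :=
      ⟨s, fun k => rfl, fun k h => hs (h ▸ hgC k)⟩
    have hspec := realize_spec f K hex
    constructor
    · rw [seq_eq]
      exact realize_mem_Cset f K κ hκ (le_of_eq hK) x₀ hgC _
    · intro b hb
      have hmem : seq f K κ x₀ s b ∈ Bset f K κ x₀ s a := mem_insert_of_mem _ ⟨b, hb, rfl⟩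
      rw [← hrange] at hmem
      obtain ⟨k, hk⟩ := hmem
      rw [seq_eq]
      exact ⟨by rw [← hk]; exact hspec.1 k, by rw [← hk]; exact hspec.2 k⟩

end ErdosRado

open ErdosRado in
/-- Erdős–Rado: if `|S| > 2^κ` for infinite `κ` and pairs of `S` are coloured by
at most `κ` colours, there is a monochromatic subset of size at least `κ⁺`. -/
theorem erdos_rado_pairs (κ : Cardinal.{u}) (hκ : Cardinal.aleph0 ≤ κ)
    (S ι : Type u) (hS : 2 ^ κ < Cardinal.mk S) (hι : Cardinal.mk ι ≤ κ)
    (f : Sym2 S → ι) :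
    ∃ J : Set S, Order.succ κ ≤ Cardinal.mk J ∧
      ∃ c : ι, ∀ x ∈ J, ∀ y ∈ J, x ≠ y → f s(x, y) = c := by
  haveI : Nonempty S := mk_ne_zero_iff.1 ((Cardinal.zero_le _).trans_lt hS).ne'
  set K := κ.ord.ToType with hKdef
  have hK : #K = κ := by rw [hKdef, mk_toType, card_ord]
  obtain ⟨x₀⟩ := ‹Nonempty S›
  have hCne : Cset f K κ x₀ ≠ Set.univ := by
    intro h
    have hle := mk_Cset_le f K κ hκ hK hι x₀
    rw [h, mk_univ] at hle
    exact absurd hS (not_lt.2 hle)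
  obtain ⟨s, hs⟩ := (Set.ne_univ_iff_exists_notMem _).1 hCne
  have hspec := seq_spec f K κ hκ hK x₀ s hs
  have hinj : Function.Injective (seq f K κ x₀ s) := by
    intro a b hab
    by_contra hne
    rcases lt_or_gt_of_ne hne with h | h
    · exact ((hspec b).2 a h).2 hab.symm
    · exact ((hspec a).2 b h).2 hab
  set col : (Order.succ κ).ord.ToType → ι := fun a => f s(s, seq f K κ x₀ s a) with hcol
  have hfib : ∃ i, Order.succ κ ≤ #(col ⁻¹' {i}) := by
    by_contra h
    push_neg at h
    have hle : ∀ i, #(col ⁻¹' {i}) ≤ κ := fun i => Order.lt_succ_iff.1 (h i)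
    have hA : #((Order.succ κ).ord.ToType) = Order.succ κ := by rw [mk_toType, card_ord]
    have hbig : #((Order.succ κ).ord.ToType) ≤ κ := by
      calc #((Order.succ κ).ord.ToType) = #(Σ i, col ⁻¹' {i}) :=
            mk_congr (Equiv.sigmaFiberEquiv col).symm
      _ = Cardinal.sum fun i => #(col ⁻¹' {i}) := mk_sigma _
      _ ≤ Cardinal.sum fun _ : ι => κ := Cardinal.sum_le_sum _ _ hle
      _ = #ι * κ := Cardinal.sum_const' _ _
      _ ≤ κ * κ := mul_le_mul' hι le_rfl
      _ = κ := mul_eq_self hκ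
    rw [hA] at hbig
    exact absurd hbig (not_le.2 (Order.lt_succ κ))
  obtain ⟨i, hi⟩ := hfib
  refine ⟨seq f K κ x₀ s '' (col ⁻¹' {i}), ?_, i, ?_⟩
  · rwa [mk_image_eq hinj]
  · rintro x ⟨a, ha, rfl⟩ y ⟨b, hb, rfl⟩ hxy
    have hane : a ≠ b := fun h => hxy (by rw [h])
    have hca : col a = i := ha
    have hcb : col b = i := hb
    rcases lt_or_gt_of_ne hane with h | h
    · rw [Sym2.eq_swap, ((hspec b).2 a h).1]
      exact hca
    · rw [((hspec a).2 b h).1]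
      exact hcb
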